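/- arXiv:1604.07522 — 10 statements merged into one kernel-verified Lean document; each statement's English description precedes it below -/
import Mathlib

section
/- If a function f : X → Y between topological spaces is weakly discontinuous, then f is resolvable, i.e., for every resolvable subset R ⊆ Y the preimage f⁻¹(R) is a resolvable subset of X. -/
open Set Filter Topology

/-- A subset `A` of a topological space `X` is *resolvable* if for every closed set `F ⊆ X`
the set `closure (F ∩ A) ∩ closure (F \ A)` is nowhere dense in the subspace `F`. -/
def IsResolvableSet {X : Type*} [TopologicalSpace X] (A : Set X) : Prop :=
  ∀ F : Set X, IsClosed F →
    IsNowhereDense (Subtype.val ⁻¹' (closure (F ∩ A) ∩ closure (F \ A)) : Set F)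

/-- A function `f : X → Y` is *weakly discontinuous* if every subspace `A ⊆ X` contains a
subset `U ⊆ A` which is open and dense in `A` and such that `f` restricted to `U` is
continuous. -/
def WeaklyDiscontinuous {X Y : Type*} [TopologicalSpace X] [TopologicalSpace Y]
    (f : X → Y) : Prop :=
  ∀ A : Set X, ∃ U : Set X, U ⊆ A ∧ (∃ V : Set X, IsOpen V ∧ U = V ∩ A) ∧
    A ⊆ closure U ∧ ContinuousOn f U

/-- A function is *resolvable* if preimages of resolvable sets are resolvable. -/
def ResolvableFunction {X Y : Type*} [TopologicalSpace X] [TopologicalSpace Y]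
    (f : X → Y) : Prop :=
  ∀ R : Set Y, IsResolvableSet R → IsResolvableSet (f ⁻¹' R)

/-- A function is *open-resolvable* if preimages of open sets are resolvable. -/
def OpenResolvableFunction {X Y : Type*} [TopologicalSpace X] [TopologicalSpace Y]
    (f : X → Y) : Prop :=
  ∀ U : Set Y, IsOpen U → IsResolvableSet (f ⁻¹' U)

/-- A base of the topology is *countably additive* if it is closed under countable unions. -/
def CountablyAdditiveBase {Y : Type*} [TopologicalSpace Y] (B : Set (Set Y)) : Prop :=
  TopologicalSpace.IsTopologicalBasis B ∧ ∀ C ⊆ B, C.Countable → ⋃₀ C ∈ B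

/-- A function is *base-resolvable* if there is a countably additive base of the topology of the
codomain whose members have resolvable preimages. -/
def BaseResolvableFunction {X Y : Type*} [TopologicalSpace X] [TopologicalSpace Y]
    (f : X → Y) : Prop :=
  ∃ B : Set (Set Y), CountablyAdditiveBase B ∧ ∀ U ∈ B, IsResolvableSet (f ⁻¹' U)

/-- A space `X` is *Preiss-Simon at `x`* if for every `A ⊆ X` with `x ∈ closure A` there is
a sequence `(U n)` of nonempty, relatively open subsets of `A` converging to `x`, i.e. every
neighborhood of `x` contains all but finitely many of the sets `U n`. -/
def PreissSimonAt {X : Type*} [TopologicalSpace X] (x : X) : Prop :=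
  ∀ A : Set X, x ∈ closure A →
    ∃ U : ℕ → Set X, (∀ n, U n ⊆ A) ∧ (∀ n, (U n).Nonempty) ∧
      (∀ n, IsOpen (Subtype.val ⁻¹' (U n) : Set A)) ∧
      ∀ V ∈ 𝓝 x, ∀ᶠ n in atTop, U n ⊆ V

/-- A *Preiss-Simon space* is a space which is Preiss-Simon at each of its points. -/
def PreissSimonSpace (X : Type*) [TopologicalSpace X] : Prop :=
  ∀ x : X, PreissSimonAt x

/-- A function is *scatteredly continuous* if its restriction to any nonempty subset has a
point of continuity. -/
def ScatteredlyContinuous {X Y : Type*} [TopologicalSpace X] [TopologicalSpace Y]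
    (f : X → Y) : Prop :=
  ∀ A : Set X, A.Nonempty → ∃ a ∈ A, ContinuousWithinAt f A a

/-- `f` is *almost continuous at `x`* if for every neighborhood `Oy` of `f x` the preimage
`f ⁻¹' Oy` is dense in some neighborhood of `x`. -/
def AlmostContinuousAt {X Y : Type*} [TopologicalSpace X] [TopologicalSpace Y]
    (f : X → Y) (x : X) : Prop :=
  ∀ Oy ∈ 𝓝 (f x), ∃ N : Set X, IsOpen N ∧ x ∈ N ∧ N ⊆ closure (f ⁻¹' Oy)

/-- `f` is *weakly continuous at `x`* if for every neighborhood `Oy` of `f x` the interior of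
the preimage `f ⁻¹' Oy` is dense in some neighborhood of `x`. -/
def WeaklyContinuousAt {X Y : Type*} [TopologicalSpace X] [TopologicalSpace Y]
    (f : X → Y) (x : X) : Prop :=
  ∀ Oy ∈ 𝓝 (f x), ∃ N : Set X, IsOpen N ∧ x ∈ N ∧ N ⊆ closure (interior (f ⁻¹' Oy))

/-- `X` has a countable π-base: a countable family of nonempty open sets such that every
nonempty open set contains a member of the family. -/
def HasCountablePiBase (X : Type*) [TopologicalSpace X] : Prop :=
  ∃ P : Set (Set X), P.Countable ∧ (∀ U ∈ P, IsOpen U ∧ U.Nonempty) ∧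
    ∀ U : Set X, IsOpen U → U.Nonempty → ∃ V ∈ P, V ⊆ U

/-- If a function between topological spaces is weakly discontinuous, then it is resolvable. -/
theorem weaklyDiscontinuous_resolvable {X Y : Type*} [TopologicalSpace X] [TopologicalSpace Y]
    (f : X → Y) (hf : WeaklyDiscontinuous f) : ResolvableFunction f := by
  intro R hR F hF
  set A := f ⁻¹' R with hA
  set S := closure (F ∩ A) ∩ closure (F \ A) with hSdef
  have hScl : IsClosed S := isClosed_closure.inter isClosed_closure
  rw [IsNowhereDense, (hScl.preimage continuous_subtype_val).closure_eq]
  by_contra hne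
  obtain ⟨z, hz⟩ := Set.nonempty_iff_ne_empty.mpr hne
  obtain ⟨W, hWopen, hWeq⟩ := isOpen_induced_iff.mp
    (isOpen_interior : IsOpen (interior (Subtype.val ⁻¹' S : Set F)))
  have hBS : W ∩ F ⊆ S := by
    rintro y ⟨hyW, hyF⟩
    have : (⟨y, hyF⟩ : F) ∈ interior (Subtype.val ⁻¹' S : Set F) := by
      rw [← hWeq]; exact hyW
    exact interior_subset (s := (Subtype.val ⁻¹' S : Set F)) this
  have hzW : (z : X) ∈ W := by rw [← hWeq] at hz; exact hz
  obtain ⟨U, hUB, ⟨V, hVopen, hUV⟩, hUdense, hUcont⟩ := hf (W ∩ F)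
  have hBne : (W ∩ F).Nonempty := ⟨z, hzW, z.2⟩
  have hUne : U.Nonempty := by
    rcases hBne with ⟨b, hb⟩
    exact (closure_nonempty_iff).mp ⟨b, hUdense hb⟩
  set K := closure (f '' U) with hK
  have hKey : ∀ u ∈ U, f u ∈ closure (K ∩ R) ∩ closure (K \ R) := by
    intro u hu
    have huVW : u ∈ V ∩ W := by
      rw [hUV] at hu; exact ⟨hu.1, hu.2.1⟩
    have hOpen : IsOpen (V ∩ W) := hVopen.inter hWopen
    have huS : u ∈ S := hBS (hUB hu)
    have hUA : U ∩ A = (V ∩ W) ∩ (F ∩ A) := by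
      ext y; rw [hUV]; simp only [Set.mem_inter_iff]; tauto
    have hUD : U \ A = (V ∩ W) ∩ (F \ A) := by
      ext y; rw [hUV]; simp only [Set.mem_inter_iff, Set.mem_diff]; tauto
    have hu1 : u ∈ closure (U ∩ A) := by
      rw [hUA]; exact hOpen.inter_closure ⟨huVW, huS.1⟩
    have hu2 : u ∈ closure (U \ A) := by
      rw [hUD]; exact hOpen.inter_closure ⟨huVW, huS.2⟩
    have hc := hUcont u hu
    have h1 : f u ∈ closure (f '' (U ∩ A)) :=
      (hc.mono Set.inter_subset_left).mem_closure_image hu1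
    have h2 : f u ∈ closure (f '' (U \ A)) :=
      (hc.mono Set.diff_subset).mem_closure_image hu2
    constructor
    · refine closure_mono ?_ h1
      rintro y ⟨a, ⟨haU, haA⟩, rfl⟩
      exact ⟨subset_closure ⟨a, haU, rfl⟩, haA⟩
    · refine closure_mono ?_ h2
      rintro y ⟨a, ⟨haU, haA⟩, rfl⟩
      exact ⟨subset_closure ⟨a, haU, rfl⟩, haA⟩
  have hNWD := hR K isClosed_closure
  have hTuniv : (Subtype.val ⁻¹' (closure (K ∩ R) ∩ closure (K \ R)) : Set K) = Set.univ := by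
    apply Set.eq_univ_of_forall
    intro k
    have hKsub : K ⊆ closure (K ∩ R) ∩ closure (K \ R) := by
      rw [hK]
      apply closure_minimal _ (isClosed_closure.inter isClosed_closure)
      rintro y ⟨u, hu, rfl⟩
      exact hKey u hu
    exact hKsub k.2
  rw [IsNowhereDense, hTuniv, closure_univ, interior_univ,
    Set.univ_eq_empty_iff] at hNWD
  rcases hUne with ⟨x, hx⟩
  exact hNWD.false ⟨f x, subset_closure ⟨x, hx, rfl⟩⟩
end

section
/- A subset A of a topological space X is resolvable if and only if its characteristic function χ_A : X → {0,1} (into the two-point discrete space, sending points of A to 1 and all other points to 0) is weakly discontinuous. -/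
open Set Filter Topology

open Classical in
/-- A subset `A` of a topological space is resolvable if and only if its characteristic
function into the two-point discrete space `Bool` is weakly discontinuous. -/
theorem isResolvableSet_iff_weaklyDiscontinuous_indicator {X : Type*} [TopologicalSpace X]
    (A : Set X) :
    IsResolvableSet A ↔
      WeaklyDiscontinuous (fun x => if x ∈ A then true else false) := by
  set f : X → Bool := fun x => if x ∈ A then true else false with hf
  have hftrue : ∀ x, f x = true ↔ x ∈ A := by
    intro x; simp only [hf]; split_ifs with h <;> simp [h]
  have hffalse : ∀ x, f x = false ↔ x ∉ A := by
    intro x; rw [← Bool.not_eq_true, not_iff_not]; exact hftrue x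
  constructor
  · -- resolvable → weakly discontinuous
    intro hres S
    set F : Set X := closure S with hFdef
    have hFcl : IsClosed F := isClosed_closure
    set D : Set X := closure (F ∩ A) ∩ closure (F \ A) with hDdef
    have hDcl : IsClosed D := isClosed_closure.inter isClosed_closure
    have hSF : S ⊆ F := subset_closure
    have hND := hres F hFcl
    have hint : interior (Subtype.val ⁻¹' D : Set F) = ∅ := by
      have hc : IsClosed (Subtype.val ⁻¹' D : Set F) :=
        hDcl.preimage continuous_subtype_val
      rw [← hc.closure_eq]
      exact hND
    -- key density fact
    have hkey : ∀ O : Set X, IsOpen O → ∀ x ∈ O ∩ F, ∃ y ∈ O ∩ F, y ∉ D := by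
      intro O hO x hx
      by_contra hcon
      push_neg at hcon
      have hsub : (Subtype.val ⁻¹' O : Set F) ⊆ Subtype.val ⁻¹' D := by
        intro z hz; exact hcon z.val ⟨hz, z.2⟩
      have hopen : IsOpen (Subtype.val ⁻¹' O : Set F) := hO.preimage continuous_subtype_val
      have : (⟨x, hx.2⟩ : F) ∈ interior (Subtype.val ⁻¹' D : Set F) :=
        interior_maximal hsub hopen hx.1
      rw [hint] at this; exact this
    refine ⟨Dᶜ ∩ S, inter_subset_right, ⟨Dᶜ, hDcl.isOpen_compl, rfl⟩, ?_, ?_⟩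
    · -- density
      intro x hx
      rw [mem_closure_iff]
      intro O hO hxO
      obtain ⟨y, hyOF, hyD⟩ := hkey O hO x ⟨hxO, hSF hx⟩
      -- O ∩ Dᶜ is open and meets F = closure S, hence meets S
      have hopen : IsOpen (O ∩ Dᶜ) := hO.inter hDcl.isOpen_compl
      have hy : y ∈ O ∩ Dᶜ := ⟨hyOF.1, hyD⟩
      have hyF : y ∈ closure S := hyOF.2
      rw [mem_closure_iff] at hyF
      obtain ⟨z, hz1, hz2⟩ := hyF (O ∩ Dᶜ) hopen hy
      exact ⟨z, hz1.1, hz1.2, hz2⟩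
    · -- continuity on Dᶜ ∩ S
      intro x hx
      have hxF : x ∈ F := hSF hx.2
      have hxD : x ∉ D := hx.1
      have hUS : Dᶜ ∩ S ⊆ F := fun z hz => hSF hz.2
      rcases (not_and_or.mp (by simpa [hDdef, mem_inter_iff] using hxD)) with hc | hc
      · -- x ∉ closure (F ∩ A) : f is false near x
        rw [mem_closure_iff] at hc; push_neg at hc
        obtain ⟨W, hW, hxW, hWd⟩ := hc
        have hWe : W ∩ (F ∩ A) = ∅ := hWd
        have hWsub : ∀ y ∈ W ∩ F, y ∉ A := by
          intro y hy hyA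
          exact eq_empty_iff_forall_notMem.mp hWe y ⟨hy.1, hy.2, hyA⟩
        have hfx : f x = false := (hffalse x).mpr (hWsub x ⟨hxW, hxF⟩)
        have hev : f =ᶠ[𝓝[Dᶜ ∩ S] x] fun _ => false := by
          filter_upwards [nhdsWithin_le_nhds (hW.mem_nhds hxW), self_mem_nhdsWithin]
            with y hyW hyU
          exact (hffalse y).mpr (hWsub y ⟨hyW, hUS hyU⟩)
        exact continuousWithinAt_const.congr_of_eventuallyEq hev hfx
      · -- x ∉ closure (F \ A) : f is true near x
        rw [mem_closure_iff] at hc; push_neg at hc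
        obtain ⟨W, hW, hxW, hWd⟩ := hc
        have hWe : W ∩ (F \ A) = ∅ := hWd
        have hWsub : ∀ y ∈ W ∩ F, y ∈ A := by
          intro y hy
          by_contra hyA
          exact eq_empty_iff_forall_notMem.mp hWe y ⟨hy.1, hy.2, hyA⟩
        have hfx : f x = true := (hftrue x).mpr (hWsub x ⟨hxW, hxF⟩)
        have hev : f =ᶠ[𝓝[Dᶜ ∩ S] x] fun _ => true := by
          filter_upwards [nhdsWithin_le_nhds (hW.mem_nhds hxW), self_mem_nhdsWithin]
            with y hyW hyU
          exact (hftrue y).mpr (hWsub y ⟨hyW, hUS hyU⟩)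
        exact continuousWithinAt_const.congr_of_eventuallyEq hev hfx
  · -- weakly discontinuous → resolvable
    intro h F hF
    obtain ⟨U, hUF, ⟨V, hV, rfl⟩, hdense, hcont⟩ := h F
    set D : Set X := closure (F ∩ A) ∩ closure (F \ A) with hDdef
    have hDcl : IsClosed D := isClosed_closure.inter isClosed_closure
    -- D is disjoint from U = V ∩ F
    have hdisj : ∀ x ∈ V ∩ F, x ∉ D := by
      intro x hx hxD
      have hcx := hcont x hx
      have hmem : f ⁻¹' {f x} ∈ 𝓝[V ∩ F] x := hcx ((isOpen_discrete {f x}).mem_nhds rfl)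
      rw [mem_nhdsWithin] at hmem
      obtain ⟨W, hW, hxW, hWsub⟩ := hmem
      cases hb : f x with
      | true =>
        -- x ∉ closure (F \ A)
        have hxA : x ∈ A := (hftrue x).mp hb
        have : (W ∩ V) ∩ (F \ A) = ∅ := by
          ext y; simp only [mem_inter_iff, mem_diff, mem_empty_iff_false, iff_false]
          rintro ⟨⟨hyW, hyV⟩, hyF, hyA⟩
          have : f y = f x := hWsub ⟨hyW, hyV, hyF⟩
          rw [hb] at this
          exact hyA ((hftrue y).mp this)
        have hx2 : x ∉ closure (F \ A) := by
          rw [mem_closure_iff]; push_neg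
          exact ⟨W ∩ V, hW.inter hV, ⟨hxW, hx.1⟩, by simp [this]⟩
        exact hx2 hxD.2
      | false =>
        have hxA : x ∉ A := (hffalse x).mp hb
        have : (W ∩ V) ∩ (F ∩ A) = ∅ := by
          ext y; simp only [mem_inter_iff, mem_empty_iff_false, iff_false]
          rintro ⟨⟨hyW, hyV⟩, hyF, hyA⟩
          have : f y = f x := hWsub ⟨hyW, hyV, hyF⟩
          rw [hb] at this
          exact ((hffalse y).mp this) hyA
        have hx2 : x ∉ closure (F ∩ A) := by
          rw [mem_closure_iff]; push_neg
          exact ⟨W ∩ V, hW.inter hV, ⟨hxW, hx.1⟩, by simp [this]⟩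
        exact hx2 hxD.1
    -- conclude nowhere density
    have hc : IsClosed (Subtype.val ⁻¹' D : Set F) := hDcl.preimage continuous_subtype_val
    show interior (closure (Subtype.val ⁻¹' D : Set F)) = ∅
    rw [hc.closure_eq, interior_eq_empty_iff_dense_compl]
    intro z
    rw [mem_closure_iff]
    intro o ho hzo
    rw [isOpen_induced_iff] at ho
    obtain ⟨G, hG, rfl⟩ := ho
    have hzG : (z : X) ∈ G := hzo
    have hzU : (z : X) ∈ closure (V ∩ F) := hdense z.2
    rw [mem_closure_iff] at hzU
    obtain ⟨y, hyG, hyU⟩ := hzU G hG hzG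
    exact ⟨⟨y, hyU.2⟩, hyG, hdisj y hyU⟩
end

section
/- If f : X → Y and g : Y → Z are weakly discontinuous functions between topological spaces, then the composition g ∘ f : X → Z is weakly discontinuous. -/
open Set Filter Topology

/-- If for every nonempty `A` there is a nonempty relatively open subset of `A` on which `f`
is continuous, then `f` is weakly discontinuous. -/
lemma weaklyDiscontinuous_of_pointwise {X Y : Type*} [TopologicalSpace X] [TopologicalSpace Y]
    (f : X → Y)
    (h : ∀ A : Set X, A.Nonempty → ∃ V : Set X, IsOpen V ∧ (V ∩ A).Nonempty ∧
      ContinuousOn f (V ∩ A)) : WeaklyDiscontinuous f := by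
  intro A
  set W := ⋃₀ {V : Set X | IsOpen V ∧ ContinuousOn f (V ∩ A)} with hWdef
  have hWopen : IsOpen W := isOpen_sUnion fun V hV => hV.1
  refine ⟨W ∩ A, inter_subset_right, ⟨W, hWopen, rfl⟩, ?_, ?_⟩
  · -- density
    by_contra hdense
    rw [Set.not_subset] at hdense
    obtain ⟨x, hxA, hxc⟩ := hdense
    obtain ⟨V, hVo, hVne, hVc⟩ := h (A ∩ (closure (W ∩ A))ᶜ) ⟨x, hxA, hxc⟩
    have hkey : V ∩ (closure (W ∩ A))ᶜ ∩ A = V ∩ (A ∩ (closure (W ∩ A))ᶜ) := by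
      ext y; constructor
      · rintro ⟨⟨h1, h2⟩, h3⟩; exact ⟨h1, h3, h2⟩
      · rintro ⟨h1, h2, h3⟩; exact ⟨⟨h1, h3⟩, h2⟩
    have hmem : V ∩ (closure (W ∩ A))ᶜ ⊆ W := by
      apply Set.subset_sUnion_of_mem
      refine ⟨hVo.inter (isClosed_closure.isOpen_compl), ?_⟩
      rw [hkey]; exact hVc
    obtain ⟨y, hyV, hyA, hyc⟩ := hVne
    exact hyc (subset_closure ⟨hmem ⟨hyV, hyc⟩, hyA⟩)
  · -- continuity
    intro x hx
    obtain ⟨V, ⟨hVo, hVc⟩, hxV⟩ := hx.1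
    exact (hVc x ⟨hxV, hx.2⟩).mono_of_mem_nhdsWithin
      (mem_nhdsWithin.2 ⟨V, hVo, hxV, fun y hy => ⟨hy.1, hy.2.2⟩⟩)

/-- The composition of weakly discontinuous functions is weakly discontinuous. -/
theorem weaklyDiscontinuous_comp {X Y Z : Type*} [TopologicalSpace X] [TopologicalSpace Y]
    [TopologicalSpace Z] (f : X → Y) (g : Y → Z)
    (hf : WeaklyDiscontinuous f) (hg : WeaklyDiscontinuous g) :
    WeaklyDiscontinuous (g ∘ f) := by
  apply weaklyDiscontinuous_of_pointwise
  intro A hA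
  obtain ⟨U, hUA, ⟨V, hVo, hUV⟩, hUd, hUc⟩ := hf A
  have hUne : U.Nonempty := by
    rcases hA with ⟨x, hx⟩
    rcases (closure_nonempty_iff).1 ⟨x, hUd hx⟩ with hne
    exact hne
  obtain ⟨U', hU'B, ⟨V', hV'o, hU'V'⟩, hU'd, hU'c⟩ := hg (f '' U)
  have hU'ne : U'.Nonempty := by
    rcases hUne with ⟨x, hx⟩
    exact (closure_nonempty_iff).1 ⟨f x, hU'd ⟨x, hx, rfl⟩⟩
  -- W = U ∩ f ⁻¹' V' is relatively open in U
  have hrel : ∀ x ∈ U ∩ f ⁻¹' V', ∃ u : Set X, IsOpen u ∧ x ∈ u ∧ u ∩ U ⊆ f ⁻¹' V' := by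
    intro x hx
    have := hUc x hx.1
    rw [ContinuousWithinAt, Filter.tendsto_def] at this
    have hmem : f ⁻¹' V' ∈ 𝓝[U] x := this _ (hV'o.mem_nhds hx.2)
    rw [mem_nhdsWithin] at hmem
    obtain ⟨u, huo, hxu, hu⟩ := hmem
    exact ⟨u, huo, hxu, hu⟩
  choose! u huo hxu hu using hrel
  set O := ⋃ x ∈ U ∩ f ⁻¹' V', u x with hOdef
  have hOopen : IsOpen O := isOpen_biUnion fun x hx => huo x hx
  have hOeq : (O ∩ V) ∩ A = U ∩ f ⁻¹' V' := by
    apply Set.Subset.antisymm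
    · rintro y ⟨⟨hyO, hyV⟩, hyA⟩
      have hyU : y ∈ U := by rw [hUV]; exact ⟨hyV, hyA⟩
      simp only [hOdef, Set.mem_iUnion] at hyO
      obtain ⟨x, hx, hyx⟩ := hyO
      exact ⟨hyU, hu x hx ⟨hyx, hyU⟩⟩
    · rintro y ⟨hyU, hyV'⟩
      have hyVA : y ∈ V ∩ A := hUV ▸ hyU
      exact ⟨⟨Set.mem_biUnion ⟨hyU, hyV'⟩ (hxu y ⟨hyU, hyV'⟩), hyVA.1⟩, hyVA.2⟩
  refine ⟨O ∩ V, hOopen.inter hVo, ?_, ?_⟩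
  · rw [hOeq]
    obtain ⟨y, hy⟩ := hU'ne
    obtain ⟨x, hxU, rfl⟩ := hU'B hy
    have : f x ∈ V' := by
      have := hU'V' ▸ hy
      exact this.1
    exact ⟨x, hxU, this⟩
  · rw [hOeq]
    have hfc : ContinuousOn f (U ∩ f ⁻¹' V') := hUc.mono inter_subset_left
    have hmaps : Set.MapsTo f (U ∩ f ⁻¹' V') U' := by
      rintro x ⟨hxU, hxV'⟩
      rw [hU'V']
      exact ⟨hxV', ⟨x, hxU, rfl⟩⟩
    exact hU'c.comp hfc hmaps
end

section
/- A function f : X → Y from a topological space X to a regular (T3) space Y is weakly discontinuous if and only if f is scatteredly continuous. -/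
open Set Filter Topology

/-- A function from a topological space to a regular (T3) space is weakly discontinuous if
and only if it is scatteredly continuous. -/
theorem weaklyDiscontinuous_iff_scatteredlyContinuous {X Y : Type*} [TopologicalSpace X]
    [TopologicalSpace Y] [T3Space Y] (f : X → Y) :
    WeaklyDiscontinuous f ↔ ScatteredlyContinuous f := by
  constructor
  · -- weakly discontinuous → scatteredly continuous
    intro h A hA
    obtain ⟨U, hUA, ⟨V, hVopen, hUV⟩, hdense, hcont⟩ := h A
    obtain ⟨a, ha⟩ := hA
    have hUne : U.Nonempty := by
      rcases U.eq_empty_or_nonempty with h0 | h0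
      · exfalso; have := hdense ha; rw [h0, closure_empty] at this; exact this
      · exact h0
    obtain ⟨u, hu⟩ := hUne
    refine ⟨u, hUA hu, ?_⟩
    have huV : u ∈ V := by rw [hUV] at hu; exact hu.1
    have hmem : U ∈ 𝓝[A] u := by
      rw [hUV, Set.inter_comm]
      exact inter_mem_nhdsWithin A (hVopen.mem_nhds huV)
    exact (hcont u hu).mono_of_mem_nhdsWithin hmem
  · -- scatteredly continuous → weakly discontinuous
    intro h A
    classical
    set D : Set X := {a ∈ A | ¬ ContinuousWithinAt f A a} with hD
    refine ⟨A \ closure D, Set.diff_subset, ⟨(closure D)ᶜ, isClosed_closure.isOpen_compl,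
      by rw [Set.inter_comm]; rfl⟩, ?_, ?_⟩
    · -- density: A ⊆ closure (A \ closure D)
      intro a haA
      by_contra hnc
      -- so there is an open V ∋ a with V ∩ (A \ closure D) = ∅, i.e. V ∩ A ⊆ closure D
      rw [mem_closure_iff] at hnc
      push_neg at hnc
      obtain ⟨V, hVopen, haV, hVempty⟩ := hnc
      have hVA : V ∩ A ⊆ closure D := by
        intro x hx
        by_contra hxc
        exact (Set.eq_empty_iff_forall_notMem.mp hVempty x) ⟨hx.1, hx.2, hxc⟩
      -- V ∩ A ⊆ closure (D ∩ V)
      have hsub : V ∩ A ⊆ closure (D ∩ V) := by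
        intro x hx
        have : x ∈ V ∩ closure D := ⟨hx.1, hVA hx⟩
        have := hVopen.inter_closure this
        rwa [Set.inter_comm] at this
      have hDVne : (D ∩ V).Nonempty := by
        rcases (D ∩ V).eq_empty_or_nonempty with h0 | h0
        · exfalso
          have := hsub ⟨haV, haA⟩
          rw [h0, closure_empty] at this
          exact this
        · exact h0
      -- apply scattered continuity to D ∩ V
      obtain ⟨d, hd, hdc⟩ := h (D ∩ V) hDVne
      have hdD : d ∈ D := hd.1
      have hdnc : ¬ ContinuousWithinAt f A d := hdD.2
      -- d is a discontinuity point of f|A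
      rw [ContinuousWithinAt] at hdnc
      have : ∃ V' ∈ 𝓝 (f d), f ⁻¹' V' ∉ 𝓝[A] d := by
        by_contra hc
        push_neg at hc
        exact hdnc fun s hs => hc s hs
      obtain ⟨V', hV', hV'n⟩ := this
      -- regularity: shrink to closed neighborhood
      obtain ⟨T, hT, hTclosed, hTV'⟩ := exists_mem_nhds_isClosed_subset hV'
      set W : Set Y := interior T with hW
      have hfdW : f d ∈ W := mem_interior_iff_mem_nhds.mpr hT
      have hclW : closure W ⊆ V' := by
        calc closure W ⊆ closure T := closure_mono interior_subset
        _ = T := hTclosed.closure_eq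
        _ ⊆ V' := hTV'
      -- continuity of f|(D ∩ V) at d for W
      have hWnhds : f ⁻¹' W ∈ 𝓝[D ∩ V] d := hdc (isOpen_interior.mem_nhds hfdW)
      rw [mem_nhdsWithin] at hWnhds
      obtain ⟨V₂, hV₂open, hdV₂, hV₂sub⟩ := hWnhds
      -- claim: (V₂ ∩ V) ∩ A ⊆ f ⁻¹' V'
      apply hV'n
      rw [mem_nhdsWithin]
      refine ⟨V₂ ∩ V, hV₂open.inter hVopen, ⟨hdV₂, hd.2⟩, ?_⟩
      intro x hx
      obtain ⟨⟨hxV₂, hxV⟩, hxA⟩ := hx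
      by_cases hxD : x ∈ D
      · have : f x ∈ W := hV₂sub ⟨hxV₂, hxD, hxV⟩
        exact hclW (subset_closure this)
      · -- x is a continuity point of f|A
        have hxc : ContinuousWithinAt f A x := by
          by_contra hc
          exact hxD ⟨hxA, hc⟩
        -- x ∈ closure (D ∩ V ∩ V₂)
        have hxcl : x ∈ closure (V₂ ∩ (D ∩ V)) := by
          have h1 : x ∈ closure (D ∩ V) := hsub ⟨hxV, hxA⟩
          exact hV₂open.inter_closure ⟨hxV₂, h1⟩
        have hsubA : V₂ ∩ (D ∩ V) ⊆ A := fun z hz => hz.2.1.1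
        have hcx : ContinuousWithinAt f (V₂ ∩ (D ∩ V)) x := hxc.mono hsubA
        have : f x ∈ closure (f '' (V₂ ∩ (D ∩ V))) := hcx.mem_closure_image hxcl
        have himg : f '' (V₂ ∩ (D ∩ V)) ⊆ W := Set.image_subset_iff.mpr hV₂sub
        exact hclW (closure_mono himg this)
    · -- continuity on A \ closure D
      intro a ha
      have hac : ContinuousWithinAt f A a := by
        by_contra hc
        exact ha.2 (subset_closure ⟨ha.1, hc⟩)
      exact hac.mono Set.diff_subset
end

section
/- If A and B are disjoint resolvable subsets of a topological space X, then closure(A) ∩ closure(B) is nowhere dense in X. -/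
open Set Filter Topology

/-- If `A` and `B` are disjoint resolvable subsets of a topological space, then
`closure A ∩ closure B` is nowhere dense. -/
theorem closure_inter_closure_nowhereDense {X : Type*} [TopologicalSpace X] {A B : Set X}
    (hA : IsResolvableSet A) (hB : IsResolvableSet B) (hAB : Disjoint A B) :
    IsNowhereDense (closure A ∩ closure B) := by
  have h := hA univ isClosed_univ
  set S := closure (univ ∩ A) ∩ closure (univ \ A) with hS
  have hSnd : IsNowhereDense S := by
    let e : (univ : Set X) ≃ₜ X := Homeomorph.Set.univ X
    have hpre : (Subtype.val ⁻¹' S : Set (univ : Set X)) = e ⁻¹' S := rfl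
    rw [IsNowhereDense, hpre, ← e.preimage_closure, ← e.preimage_interior] at h
    have := congrArg (fun t => e '' t) h
    simpa [IsNowhereDense, e.image_preimage] using this
  have hsub : closure A ∩ closure B ⊆ S := by
    apply inter_subset_inter
    · rw [univ_inter]
    · exact closure_mono fun x hx => ⟨mem_univ x, fun hxA => hAB.le_bot ⟨hxA, hx⟩⟩
  have : interior (closure (closure A ∩ closure B)) ⊆ interior (closure S) :=
    interior_mono (closure_mono hsub)
  rw [IsNowhereDense]
  rw [hSnd] at this
  exact eq_empty_of_subset_empty this
end

section
/- Let f : X → Y be a base-resolvable function from a topological space X to a Hausdorff space Y. Then AC(f) = WC(f), i.e., f is almost continuous at a point x ∈ X if and only if f is weakly continuous at x. -/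
open Set Filter Topology

lemma nowhereDense_of_univ {X : Type*} [TopologicalSpace X] {D : Set X}
    (h : IsNowhereDense (Subtype.val ⁻¹' D : Set (univ : Set X))) : IsNowhereDense D := by
  set e := Homeomorph.Set.univ X with he
  have hpre : (Subtype.val ⁻¹' D : Set (univ : Set X)) = e ⁻¹' D := rfl
  rw [IsNowhereDense] at h ⊢
  rw [hpre, ← e.preimage_closure, ← e.preimage_interior] at h
  have := congrArg (fun s => e '' s) h
  simpa [Set.image_preimage_eq _ e.surjective] using this

lemma resolvable_key {X : Type*} [TopologicalSpace X] {A : Set X}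
    (h : IsResolvableSet A) {O : Set X} (hO : IsOpen O) (hOA : O ⊆ closure A) :
    O ⊆ closure (interior A) := by
  have hD : IsNowhereDense (closure A ∩ closure (Set.univ \ A)) := by
    have := nowhereDense_of_univ (h Set.univ isClosed_univ)
    simpa using this
  intro z hz
  rw [mem_closure_iff]
  intro V hV hzV
  have hVO : IsOpen (V ∩ O) := hV.inter hO
  have hne : (V ∩ O).Nonempty := ⟨z, hzV, hz⟩
  have hnotsub : ¬ (V ∩ O ⊆ closure (closure A ∩ closure (Set.univ \ A))) := by
    intro hsub
    have : V ∩ O ⊆ interior (closure (closure A ∩ closure (Set.univ \ A))) :=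
      hVO.subset_interior_iff.mpr hsub
    rw [hD] at this
    exact hne.ne_empty (Set.subset_empty_iff.mp this)
  obtain ⟨w, hw, hwD⟩ := Set.not_subset.mp hnotsub
  have hwA : w ∈ closure A := hOA hw.2
  have hwc : w ∉ closure (Set.univ \ A) := by
    intro hc
    exact hwD (subset_closure ⟨hwA, hc⟩)
  have : w ∈ interior A := by
    have : w ∉ closure Aᶜ := by simpa [Set.compl_eq_univ_diff] using hwc
    rw [closure_compl] at this
    simpa using this
  exact ⟨w, hw.1, this⟩

/-- For a base-resolvable function into a Hausdorff space, the set of points of almost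
continuity coincides with the set of points of weak continuity. -/
theorem almostContinuous_eq_weaklyContinuous {X Y : Type*} [TopologicalSpace X]
    [TopologicalSpace Y] [T2Space Y] (f : X → Y) (hf : BaseResolvableFunction f) :
    {x : X | AlmostContinuousAt f x} = {x : X | WeaklyContinuousAt f x} := by
  ext x
  simp only [Set.mem_setOf_eq]
  constructor
  · intro h Oy hOy
    obtain ⟨B, ⟨hbasis, _⟩, hres⟩ := hf
    obtain ⟨O, hOsub, hOopen, hxO⟩ := mem_nhds_iff.mp hOy
    obtain ⟨U, hUB, hxU, hUO⟩ := hbasis.exists_subset_of_mem_open hxO hOopen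
    have hUnhds : U ∈ 𝓝 (f x) := (hbasis.isOpen hUB).mem_nhds hxU
    obtain ⟨N, hNopen, hxN, hNsub⟩ := h U hUnhds
    refine ⟨N, hNopen, hxN, ?_⟩
    have := resolvable_key (hres U hUB) hNopen hNsub
    exact this.trans (closure_mono (interior_mono (Set.preimage_mono (hUO.trans hOsub))))
  · intro h Oy hOy
    obtain ⟨N, hNopen, hxN, hNsub⟩ := h Oy hOy
    exact ⟨N, hNopen, hxN, hNsub.trans (closure_mono interior_subset)⟩
end

section
/- Let f : X → Y be a base-resolvable function from a topological space X to a regular (T3) space Y. If D ⊆ X is dense in X and the restriction f|D has no point of continuity, then the set D \ AC(f) is also dense in X. -/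
open Set Filter Topology

lemma IsResolvableSet.interior_empty {X : Type*} [TopologicalSpace X] {A : Set X}
    (hA : IsResolvableSet A) : interior (closure A ∩ closure Aᶜ) = ∅ := by
  have h := hA univ isClosed_univ
  have hSc : IsClosed (closure (univ ∩ A) ∩ closure (univ \ A)) :=
    isClosed_closure.inter isClosed_closure
  have hcont : Continuous (Subtype.val : ↥(univ : Set X) → X) := by
    exact continuous_subtype_val
  have hopen : IsOpenMap (Subtype.val : ↥(univ : Set X) → X) :=
    isOpen_univ.isOpenMap_subtype_val
  rw [IsNowhereDense, (hSc.preimage hcont).closure_eq,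
    ← hopen.preimage_interior_eq_interior_preimage hcont] at h
  have hsurj : Function.Surjective (Subtype.val : ↥(univ : Set X) → X) :=
    fun x => ⟨⟨x, trivial⟩, rfl⟩
  have h2 : interior (closure (univ ∩ A) ∩ closure (univ \ A)) = ∅ := by
    rw [← image_preimage_eq (interior _) hsurj, h, image_empty]
  rwa [univ_inter, ← compl_eq_univ_diff] at h2

lemma IsResolvableSet.subset_closure_interior {X : Type*} [TopologicalSpace X] {A N : Set X}
    (hA : IsResolvableSet A) (hN : IsOpen N) (h : N ⊆ closure A) :
    N ⊆ closure (interior A) := by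
  intro x hx
  by_contra hxc
  have hW : IsOpen (N ∩ (closure (interior A))ᶜ) :=
    hN.inter isClosed_closure.isOpen_compl
  have hWsub : N ∩ (closure (interior A))ᶜ ⊆ closure A ∩ closure Aᶜ := by
    rintro w ⟨hw1, hw2⟩
    refine ⟨h hw1, ?_⟩
    rw [closure_compl]
    intro hw3
    exact hw2 (subset_closure (by simpa using hw3))
  have : x ∈ interior (closure A ∩ closure Aᶜ) :=
    interior_maximal hWsub hW ⟨hx, hxc⟩
  rw [hA.interior_empty] at this
  exact this

/-- If `f` is base-resolvable into a regular (T3) space, `D` is dense in `X` and `f|D` has no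
point of continuity, then `D \ AC(f)` is dense in `X`. -/
theorem dense_diff_almostContinuous {X Y : Type*} [TopologicalSpace X]
    [TopologicalSpace Y] [T3Space Y] (f : X → Y) (hf : BaseResolvableFunction f)
    (D : Set X) (hD : Dense D) (hnc : ∀ x ∈ D, ¬ ContinuousWithinAt f D x) :
    Dense (D \ {x : X | AlmostContinuousAt f x}) := by
  obtain ⟨𝓑, ⟨hbasis, -⟩, hres⟩ := hf
  rw [dense_iff_inter_open]
  intro U hU hUne
  by_contra hcon
  rw [not_nonempty_iff_eq_empty] at hcon
  have hAC : ∀ x ∈ U ∩ D, AlmostContinuousAt f x := by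
    rintro x ⟨hxU, hxD⟩
    by_contra hx
    exact (eq_empty_iff_forall_notMem.mp hcon x) ⟨hxU, hxD, hx⟩
  obtain ⟨x, hx⟩ := hD.inter_open_nonempty U hU hUne
  have hxU : x ∈ U := hx.1
  have hxD : x ∈ D := hx.2
  have hnx := hnc x hxD
  rw [ContinuousWithinAt, tendsto_def] at hnx
  push_neg at hnx
  obtain ⟨Oy, hOy, hOyn⟩ := hnx
  obtain ⟨C, hC, hCc, hCs⟩ := exists_mem_nhds_isClosed_subset hOy
  obtain ⟨B, hB𝓑, hfxB, hBC⟩ := hbasis.exists_subset_of_mem_open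
    (mem_interior_iff_mem_nhds.mpr hC) isOpen_interior
  have hBC' : B ⊆ C := hBC.trans interior_subset
  have hBnhds : B ∈ 𝓝 (f x) := (hbasis.isOpen hB𝓑).mem_nhds hfxB
  obtain ⟨N, hNopen, hxN, hNcl⟩ := hAC x ⟨hxU, hxD⟩ B hBnhds
  set N' := N ∩ U with hN'def
  have hN'open : IsOpen N' := hNopen.inter hU
  have hxN' : x ∈ N' := ⟨hxN, hxU⟩
  have hN'cl : N' ⊆ closure (interior (f ⁻¹' B)) :=
    (hres B hB𝓑).subset_closure_interior hN'open
      (fun z hz => hNcl hz.1)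
  -- find d ∈ N' ∩ D with f d ∉ C
  have hnsub : ¬ (N' ∩ D ⊆ f ⁻¹' C) := by
    intro hsub
    exact hOyn (mem_of_superset
      (mem_nhdsWithin.mpr ⟨N', hN'open, hxN', hsub⟩) (preimage_mono hCs))
  obtain ⟨d, ⟨hdN', hdD⟩, hdC⟩ := not_subset.mp hnsub
  obtain ⟨B', hB'𝓑, hfdB', hB'C⟩ := hbasis.exists_subset_of_mem_open
    (show f d ∈ Cᶜ from hdC) hCc.isOpen_compl
  have hB'nhds : B' ∈ 𝓝 (f d) := (hbasis.isOpen hB'𝓑).mem_nhds hfdB'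
  obtain ⟨M, hMopen, hdM, hMcl⟩ := hAC d ⟨hdN'.2, hdD⟩ B' hB'nhds
  set M'' := M ∩ N' with hM''def
  have hM''open : IsOpen M'' := hMopen.inter hN'open
  have hdM'' : d ∈ M'' := ⟨hdM, hdN'⟩
  have hM''cl : M'' ⊆ closure (interior (f ⁻¹' B')) :=
    (hres B' hB'𝓑).subset_closure_interior hM''open
      (fun z hz => hMcl hz.1)
  -- d ∈ M'' ⊆ N' ⊆ closure (interior (f⁻¹ B)); get point of interior (f⁻¹ B) in M''
  have hdcl : d ∈ closure (interior (f ⁻¹' B)) := hN'cl hdN'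
  obtain ⟨z, hzM, hzA⟩ := mem_closure_iff.mp hdcl M'' hM''open hdM''
  -- z ∈ interior (f⁻¹ B) ∩ M'' ⊆ closure (interior (f⁻¹ B'))
  have hzcl : z ∈ closure (interior (f ⁻¹' B')) := hM''cl hzM
  obtain ⟨w, hwW, hwA'⟩ := mem_closure_iff.mp hzcl
    (interior (f ⁻¹' B) ∩ M'') (isOpen_interior.inter hM''open) ⟨hzA, hzM⟩
  have hwB : w ∈ f ⁻¹' B := interior_subset hwW.1
  have hwB' : w ∈ f ⁻¹' B' := interior_subset hwA'
  exact hB'C hwB' (hBC' hwB)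
end

section
/- Let f : X → Y be a base-resolvable function from a topological space X to a Hausdorff space Y. Then the family {interior(closure(f⁻¹(y))) : y ∈ Y} is pairwise disjoint; that is, for distinct points y, z ∈ Y the sets interior(closure(f⁻¹(y))) and interior(closure(f⁻¹(z))) are disjoint. -/
open Set Filter Topology

lemma interior_empty_of_univ_nwd {X : Type*} [TopologicalSpace X] (S : Set X)
    (h : IsNowhereDense (Subtype.val ⁻¹' S : Set (univ : Set X))) :
    interior S = ∅ := by
  by_contra hne
  obtain ⟨x, hx⟩ := nonempty_iff_ne_empty.mpr hne
  have h1 : (⟨x, mem_univ x⟩ : (univ : Set X)) ∈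
      interior (closure (Subtype.val ⁻¹' S : Set (univ : Set X))) := by
    apply interior_mono subset_closure
    refine mem_interior_iff_mem_nhds.mpr ?_
    exact (continuous_subtype_val.continuousAt).preimage_mem_nhds
      (mem_interior_iff_mem_nhds.mp hx)
  rw [h] at h1
  exact h1

/-- For a base-resolvable function into a Hausdorff space, the family of sets
`interior (closure (f ⁻¹' {y}))`, `y ∈ Y`, is pairwise disjoint. -/
theorem interior_closure_fiber_disjoint {X Y : Type*} [TopologicalSpace X]
    [TopologicalSpace Y] [T2Space Y] (f : X → Y) (hf : BaseResolvableFunction f) :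
    ∀ y z : Y, y ≠ z →
      Disjoint (interior (closure (f ⁻¹' {y}))) (interior (closure (f ⁻¹' {z}))) := by
  intro y z hyz
  obtain ⟨B, ⟨hbasis, -⟩, hres⟩ := hf
  obtain ⟨Vy, Vz, hVy, hVz, hyVy, hzVz, hdisj⟩ := t2_separation hyz
  obtain ⟨b, hbB, hyb, hbsub⟩ := hbasis.exists_subset_of_mem_open hyVy hVy
  set A := f ⁻¹' b with hA
  have hnwd := hres b hbB univ isClosed_univ
  have hint : interior (closure A ∩ closure Aᶜ) = ∅ := by
    have := interior_empty_of_univ_nwd _ hnwd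
    simpa only [univ_inter, ← Set.compl_eq_univ_diff, ← hA] using this
  have h1 : f ⁻¹' {y} ⊆ A := fun x hx => by
    simp only [mem_preimage, mem_singleton_iff] at hx
    simpa [hA, hx] using hyb
  have h2 : f ⁻¹' {z} ⊆ Aᶜ := fun x hx => by
    simp only [mem_preimage, mem_singleton_iff] at hx
    intro hxA
    exact hdisj.le_bot ⟨hbsub (by simpa [hA, hx] using hxA), hzVz⟩
  rw [Set.disjoint_iff]
  intro x ⟨hxy, hxz⟩
  have : x ∈ interior (closure A ∩ closure Aᶜ) := by
    rw [interior_inter]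
    exact ⟨interior_mono (closure_mono h1) hxy, interior_mono (closure_mono h2) hxz⟩
  rw [hint] at this
  exact this
end

section
/- Let f : X → Y be a base-resolvable function from a topological space X to a regular (T3) space Y, and let D be a countable dense subset of X such that the restriction f|D has no point of continuity. Then for every finite subset F ⊆ Y there exists a subset Q ⊆ D \ f⁻¹(F) that is dense in X and such that the restriction f|Q has no point of continuity. -/
open Set Filter Topology

/-- transfer nowhere-density from the `univ` subtype to the space. -/
lemma isNowhereDense_of_univ_subtype {X : Type*} [TopologicalSpace X] (S : Set X)
    (h : IsNowhereDense (Subtype.val ⁻¹' S : Set (univ : Set X))) : IsNowhereDense S := by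
  set e := Homeomorph.Set.univ X with he
  have h1 : (Subtype.val ⁻¹' S : Set (univ : Set X)) = ⇑e ⁻¹' S := rfl
  rw [h1, IsNowhereDense, ← e.preimage_closure, ← e.preimage_interior] at h
  have h2 := congrArg (fun s => ⇑e '' s) h
  show interior (closure S) = ∅
  simpa [e.surjective.image_preimage] using h2

lemma resolvable_nowhereDense {X : Type*} [TopologicalSpace X] {A : Set X}
    (h : IsResolvableSet A) : IsNowhereDense (closure A ∩ closure Aᶜ) := by
  have := h univ isClosed_univ
  rw [univ_inter] at this
  have h2 : (univ : Set X) \ A = Aᶜ := by simp [compl_eq_univ_diff]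
  rw [h2] at this
  exact isNowhereDense_of_univ_subtype _ this

/-- the one-point step -/
lemma step_lemma {X Y : Type*} [TopologicalSpace X] [TopologicalSpace Y] [T1Space Y]
    (f : X → Y) (𝓑 : Set (Set Y)) (hbasis : TopologicalSpace.IsTopologicalBasis 𝓑)
    (hadd : ∀ C ⊆ 𝓑, C.Countable → ⋃₀ C ∈ 𝓑)
    (hres : ∀ U ∈ 𝓑, IsResolvableSet (f ⁻¹' U))
    (D : Set X) (hDc : D.Countable) (hD : Dense D)
    (hnc : ∀ x ∈ D, ¬ ContinuousWithinAt f D x) (y : Y) :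
    ∃ Q ⊆ D \ f ⁻¹' {y}, Dense Q ∧ ∀ x ∈ Q, ¬ ContinuousWithinAt f Q x := by
  set Q₀ : Set X := D \ f ⁻¹' {y} with hQ₀def
  have hQ₀D : Q₀ ⊆ D := diff_subset
  have hQ₀c : Q₀.Countable := hDc.mono hQ₀D
  -- Q₀ is dense
  have hQ₀dense : Dense Q₀ := by
    rw [dense_iff_inter_open]
    intro V hV hVne
    by_contra hcon
    rw [not_nonempty_iff_eq_empty] at hcon
    obtain ⟨d, hdV, hdD⟩ := hD.inter_open_nonempty V hV hVne
    have hconst : ∀ a ∈ D ∩ V, f a = y := by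
      intro a ⟨haD, haV⟩
      by_contra hne
      have hmem : a ∈ V ∩ Q₀ := ⟨haV, haD, hne⟩
      rw [hcon] at hmem
      exact hmem
    have hfd : f d = y := hconst d ⟨hdD, hdV⟩
    refine hnc d hdD ?_
    have : Tendsto f (𝓝[D] d) (𝓝 y) := by
      refine Tendsto.congr' ?_ tendsto_const_nhds
      filter_upwards [self_mem_nhdsWithin,
        nhdsWithin_le_nhds (hV.mem_nhds hdV)] with a haD haV
      exact (hconst a ⟨haD, haV⟩).symm
    rwa [ContinuousWithinAt, hfd]
  -- choose basic sets avoiding y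
  have hchoice : ∀ q : Q₀, ∃ b ∈ 𝓑, f q ∈ b ∧ b ⊆ {y}ᶜ := by
    intro q
    have hq : f (q : X) ∈ ({y}ᶜ : Set Y) := q.2.2
    exact hbasis.exists_subset_of_mem_open hq isOpen_compl_singleton
  choose g hg1 hg2 hg3 using hchoice
  have : Countable Q₀ := hQ₀c.to_subtype
  set C : Set (Set Y) := Set.range g with hCdef
  have hCB : C ⊆ 𝓑 := by rintro b ⟨q, rfl⟩; exact hg1 q
  have hCc : C.Countable := countable_range g
  set A : Set X := f ⁻¹' ⋃₀ C with hAdef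
  have hAres : IsResolvableSet A := hres _ (hadd C hCB hCc)
  have hQ₀A : Q₀ ⊆ A := fun q hq => ⟨g ⟨q, hq⟩, ⟨⟨q, hq⟩, rfl⟩, hg2 ⟨q, hq⟩⟩
  have hAy : ∀ a ∈ A, f a ≠ y := by
    rintro a ⟨b, ⟨q, rfl⟩, hb⟩ h
    exact hg3 q hb (by simp [h])
  set N : Set X := closure A ∩ closure Aᶜ with hNdef
  have hNnd : IsNowhereDense N := resolvable_nowhereDense hAres
  have hNcl : IsClosed N := isClosed_closure.inter isClosed_closure
  refine ⟨Q₀ \ N, fun x hx => hx.1, ?_, ?_⟩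
  · -- dense
    rw [dense_iff_inter_open]
    intro U hU hUne
    have hUN : (U ∩ Nᶜ).Nonempty := by
      by_contra h
      rw [not_nonempty_iff_eq_empty] at h
      have hsub : U ⊆ N := fun u hu => by
        by_contra hn
        have hmem : u ∈ U ∩ Nᶜ := ⟨hu, hn⟩
        rw [h] at hmem
        exact hmem
      have : U ⊆ interior (closure N) :=
        fun u hu => (hU.subset_interior_iff.2 (hsub.trans subset_closure)) hu
      rw [hNnd] at this
      exact hUne.ne_empty (subset_empty_iff.1 this)
    obtain ⟨v, hv, hvQ⟩ := hQ₀dense.inter_open_nonempty _ (hU.inter hNcl.isOpen_compl) hUN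
    exact ⟨v, hv.1, hvQ, hv.2⟩
  · -- no continuity point
    intro x hx h
    have hxQ₀ : x ∈ Q₀ := hx.1
    have hxA : x ∈ A := hQ₀A hxQ₀
    have hxN : x ∉ N := hx.2
    have hxcl : x ∉ closure Aᶜ := fun hc => hxN ⟨subset_closure hxA, hc⟩
    set G : Set X := (closure Aᶜ)ᶜ ∩ Nᶜ with hGdef
    have hGopen : IsOpen G := isClosed_closure.isOpen_compl.inter hNcl.isOpen_compl
    have hxG : x ∈ G := ⟨hxcl, hxN⟩
    have hDG : D ∩ G = (Q₀ \ N) ∩ G := by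
      ext d
      constructor
      · rintro ⟨hdD, hdc, hdN⟩
        have hdA : d ∈ A := by
          by_contra hn
          exact hdc (subset_closure hn)
        exact ⟨⟨⟨hdD, hAy d hdA⟩, hdN⟩, hdc, hdN⟩
      · rintro ⟨⟨hdQ, _⟩, hdG⟩
        exact ⟨hQ₀D hdQ, hdG⟩
    have hGmem : G ∈ 𝓝 x := hGopen.mem_nhds hxG
    have hfilt : 𝓝[D] x = 𝓝[Q₀ \ N] x := by
      rw [nhdsWithin_restrict' D hGmem, nhdsWithin_restrict' (Q₀ \ N) hGmem, hDG]
    exact hnc x (hQ₀D hxQ₀) (by rwa [ContinuousWithinAt, hfilt])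

theorem main {X Y : Type*} [TopologicalSpace X]
    [TopologicalSpace Y] [T3Space Y] (f : X → Y)
    (𝓑 : Set (Set Y)) (hbasis : TopologicalSpace.IsTopologicalBasis 𝓑)
    (hadd : ∀ C ⊆ 𝓑, C.Countable → ⋃₀ C ∈ 𝓑)
    (hres : ∀ U ∈ 𝓑, IsResolvableSet (f ⁻¹' U)) :
    ∀ F : Set Y, F.Finite → ∀ D : Set X, D.Countable → Dense D →
      (∀ x ∈ D, ¬ ContinuousWithinAt f D x) →
      ∃ Q ⊆ D \ f ⁻¹' F, Dense Q ∧ ∀ x ∈ Q, ¬ ContinuousWithinAt f Q x := by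
  intro F hF
  refine Set.Finite.induction_on
    (motive := fun F _ => ∀ D : Set X, D.Countable → Dense D →
      (∀ x ∈ D, ¬ ContinuousWithinAt f D x) →
      ∃ Q ⊆ D \ f ⁻¹' F, Dense Q ∧ ∀ x ∈ Q, ¬ ContinuousWithinAt f Q x)
    F hF ?_ ?_
  · intro D hDc hD hnc
    exact ⟨D, by simp, hD, hnc⟩
  · intro y F hyF hFfin ih D hDc hD hnc
    obtain ⟨Q₁, hQ₁sub, hQ₁dense, hQ₁nc⟩ :=
      step_lemma f 𝓑 hbasis hadd hres D hDc hD hnc y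
    obtain ⟨Q, hQsub, hQdense, hQnc⟩ :=
      ih Q₁ (hDc.mono (hQ₁sub.trans diff_subset)) hQ₁dense hQ₁nc
    refine ⟨Q, ?_, hQdense, hQnc⟩
    intro q hq
    have hq1 := hQsub hq
    have hq2 := hQ₁sub hq1.1
    refine ⟨hq2.1, ?_⟩
    simp only [mem_preimage, mem_insert_iff, not_or]
    exact ⟨hq2.2, hq1.2⟩

/-- Let `f` be base-resolvable into a regular (T3) space, and `D` a countable dense subset of
`X` such that `f|D` has no point of continuity. Then for every finite `F ⊆ Y` there is a
subset `Q ⊆ D \ f⁻¹(F)` that is dense in `X` such that `f|Q` has no point of continuity. -/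
theorem exists_dense_subset_avoiding_finite {X Y : Type*} [TopologicalSpace X]
    [TopologicalSpace Y] [T3Space Y] (f : X → Y) (hf : BaseResolvableFunction f)
    (D : Set X) (hDc : D.Countable) (hD : Dense D)
    (hnc : ∀ x ∈ D, ¬ ContinuousWithinAt f D x) :
    ∀ F : Set Y, F.Finite → ∃ Q ⊆ D \ f ⁻¹' F, Dense Q ∧
      ∀ x ∈ Q, ¬ ContinuousWithinAt f Q x := by
  obtain ⟨𝓑, ⟨hbasis, hadd⟩, hres⟩ := hf
  intro F hF
  exact main f 𝓑 hbasis hadd hres F hF D hDc hD hnc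
end

section
/- If a topological space X has a countable dense subset D such that X is Preiss-Simon at every point of D, then X has a countable π-base. -/
open Set Filter Topology

/-- If `X` has a countable dense subset `D` such that `X` is Preiss-Simon at every point of
`D`, then `X` has a countable π-base. -/
theorem countable_piBase_of_preissSimon_dense {X : Type*} [TopologicalSpace X]
    (D : Set X) (hDc : D.Countable) (hD : Dense D) (hPS : ∀ x ∈ D, PreissSimonAt x) :
    HasCountablePiBase X := by
  choose U hsub hne hopen hconv using fun d : D => hPS d.1 d.2 univ (by simp)
  haveI := hDc.to_subtype
  have hopen' : ∀ (d : D) (n : ℕ), IsOpen (U d n) := by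
    intro d n
    rcases isOpen_induced_iff.1 (hopen d n) with ⟨t, ht, hts⟩
    have : t = U d n := by
      ext x
      have := Set.ext_iff.1 hts ⟨x, mem_univ x⟩
      simpa using this
    rwa [← this]
  refine ⟨⋃ d : D, Set.range (U d), Set.countable_iUnion fun d => Set.countable_range _,
    ?_, ?_⟩
  · rintro S hS
    simp only [mem_iUnion, mem_range] at hS
    obtain ⟨d, n, rfl⟩ := hS
    exact ⟨hopen' d n, hne d n⟩
  · intro V hV hVne
    obtain ⟨x, hxD, hxV⟩ := hD.exists_mem_open hV hVne
    obtain ⟨n, hn⟩ := (hconv ⟨x, hxD⟩ V (hV.mem_nhds hxV)).exists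
    exact ⟨U ⟨x, hxD⟩ n, mem_iUnion.2 ⟨⟨x, hxD⟩, n, rfl⟩, hn⟩
end
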